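/- In ℙ²(𝔽₄), any six points, no three of which are collinear, with the first four equal to (1:0:0), (0:1:0), (0:0:1), (1:1:1), have the remaining two points equal (in some order) to (ω : ω+1 : 1) and (ω² : ω²+1 : 1), where ω ∈ 𝔽₄ satisfies ω² + ω + 1 = 0. In particular, the configuration of six points of ℙ²(𝔽₄) in general position is unique up to projective equivalence and permutation. -/
import Mathlib

private lemma gf2two : (2 : GaloisField 2 2) = 0 := by
  exact_mod_cast CharP.cast_eq_zero (GaloisField 2 2) 2

private lemma gfroot (x : GaloisField 2 2) (h0 : x ≠ 0) (h1 : x ≠ 1) :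
    x ^ 2 + x + 1 = 0 := by
  haveI : Fintype (GaloisField 2 2) := Fintype.ofFinite _
  have h := FiniteField.pow_card x
  have hc : Fintype.card (GaloisField 2 2) = 4 := by
    have := GaloisField.card 2 2 (by norm_num); simpa using this
  rw [hc] at h
  have key : x * ((x - 1) * (x ^ 2 + x + 1)) = 0 := by linear_combination h
  rcases mul_eq_zero.1 key with h' | h'
  · exact absurd h' h0
  rcases mul_eq_zero.1 h' with h' | h'
  · exact absurd (sub_eq_zero.1 h') h1
  · exact h'

private lemma gfroots_rel (x y : GaloisField 2 2) (hx : x ^ 2 + x + 1 = 0)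
    (hy : y ^ 2 + y + 1 = 0) (hxy : x ≠ y) : y = x + 1 := by
  have key : (x - y) * (x + y + 1) = 0 := by linear_combination hx - hy
  rcases mul_eq_zero.1 key with h' | h'
  · exact absurd (sub_eq_zero.1 h') hxy
  · linear_combination h' - gf2two * x - gf2two

/-- Uniqueness part of Lemma 5.2: in `ℙ²(𝔽₄)`, any six points, no three collinear, with
the first four equal to `(1:0:0), (0:1:0), (0:0:1), (1:1:1)`, have the remaining two
points equal (in some order, accounted for by the choice of the root `ω` of
`ω² + ω + 1 = 0`) to `(ω : ω+1 : 1)` and `(ω² : ω²+1 : 1)`. -/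
theorem stmt17 (p : Fin 6 → Fin 3 → GaloisField 2 2)
    (hp0 : p 0 = ![1, 0, 0]) (hp1 : p 1 = ![0, 1, 0]) (hp2 : p 2 = ![0, 0, 1])
    (hp3 : p 3 = ![1, 1, 1])
    (hne : ∀ i, p i ≠ 0)
    (hcol : ∀ i j k : Fin 6, i ≠ j → i ≠ k → j ≠ k →
      Matrix.det (Matrix.of ![p i, p j, p k]) ≠ 0) :
    ∃ ω : GaloisField 2 2, ω ^ 2 + ω + 1 = 0 ∧
      ∃ t s : GaloisField 2 2, t ≠ 0 ∧ s ≠ 0 ∧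
        p 4 = t • ![ω, ω + 1, 1] ∧ p 5 = s • ![ω ^ 2, ω ^ 2 + 1, 1] := by
  set a := p 4 0 with ha; set b := p 4 1 with hb; set c := p 4 2 with hc
  set d := p 5 0 with hd; set e := p 5 1 with he; set f := p 5 2 with hf
  have h014 := hcol 0 1 4 (by decide) (by decide) (by decide)
  have h024 := hcol 0 2 4 (by decide) (by decide) (by decide)
  have h124 := hcol 1 2 4 (by decide) (by decide) (by decide)
  have h034 := hcol 0 3 4 (by decide) (by decide) (by decide)
  have h134 := hcol 1 3 4 (by decide) (by decide) (by decide)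
  have h234 := hcol 2 3 4 (by decide) (by decide) (by decide)
  have h015 := hcol 0 1 5 (by decide) (by decide) (by decide)
  have h025 := hcol 0 2 5 (by decide) (by decide) (by decide)
  have h125 := hcol 1 2 5 (by decide) (by decide) (by decide)
  have h035 := hcol 0 3 5 (by decide) (by decide) (by decide)
  have h045 := hcol 0 4 5 (by decide) (by decide) (by decide)
  rw [hp0, hp1] at h014
  rw [hp0, hp2] at h024
  rw [hp1, hp2] at h124
  rw [hp0, hp3] at h034
  rw [hp1, hp3] at h134
  rw [hp2, hp3] at h234
  rw [hp0, hp1] at h015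
  rw [hp0, hp2] at h025
  rw [hp1, hp2] at h125
  rw [hp0, hp3] at h035
  rw [hp0] at h045
  simp only [Matrix.det_fin_three, Matrix.of_apply, Matrix.cons_val', Matrix.cons_val_zero,
    Matrix.cons_val_one, Matrix.head_cons, Matrix.empty_val', Matrix.cons_val_fin_one,
    Matrix.head_fin_const, Matrix.cons_val_two, Matrix.tail_cons,
    mul_one, mul_zero, one_mul, zero_mul, sub_zero, zero_sub, add_zero, zero_add, neg_neg,
    neg_ne_zero, sub_ne_zero] at h014 h024 h124 h034 h134 h234 h015 h025 h125 h035 h045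
  have h135 := hcol 1 3 5 (by decide) (by decide) (by decide)
  have h235 := hcol 2 3 5 (by decide) (by decide) (by decide)
  rw [hp1, hp3] at h135
  rw [hp2, hp3] at h235
  simp only [Matrix.det_fin_three, Matrix.of_apply, Matrix.cons_val', Matrix.cons_val_zero,
    Matrix.cons_val_one, Matrix.head_cons, Matrix.empty_val', Matrix.cons_val_fin_one,
    Matrix.head_fin_const, Matrix.cons_val_two, Matrix.tail_cons,
    mul_one, mul_zero, one_mul, zero_mul, sub_zero, zero_sub, add_zero, zero_add, neg_neg,
    neg_ne_zero, sub_ne_zero] at h135 h235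
  have h134' : p 4 0 ≠ p 4 2 := fun h => h134 (by rw [h]; ring)
  have h135' : p 5 0 ≠ p 5 2 := fun h => h135 (by rw [h]; ring)
  set x := p 4 0 / p 4 2 with hxdef
  set y := p 4 1 / p 4 2 with hydef
  set u := p 5 0 / p 5 2 with hudef
  set v := p 5 1 / p 5 2 with hvdef
  have hx0 : x ≠ 0 := div_ne_zero h124 h014
  have hx1 : x ≠ 1 := fun h => h134' ((div_eq_one_iff_eq h014).1 h)
  have hy0 : y ≠ 0 := div_ne_zero h024 h014
  have hy1 : y ≠ 1 := fun h => h034 ((div_eq_one_iff_eq h014).1 h).symm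
  have hu0 : u ≠ 0 := div_ne_zero h125 h015
  have hu1 : u ≠ 1 := fun h => h135' ((div_eq_one_iff_eq h015).1 h)
  have hv0 : v ≠ 0 := div_ne_zero h025 h015
  have hv1 : v ≠ 1 := fun h => h035 ((div_eq_one_iff_eq h015).1 h).symm
  have hx := gfroot x hx0 hx1
  have hy := gfroot y hy0 hy1
  have hu := gfroot u hu0 hu1
  have hv := gfroot v hv0 hv1
  have hxy : x ≠ y := by
    intro h
    have := (div_eq_div_iff h014 h014).1 h
    exact h234 (mul_right_cancel₀ h014 this).symm
  have huv : u ≠ v := by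
    intro h
    have := (div_eq_div_iff h015 h015).1 h
    exact h235 (mul_right_cancel₀ h015 this).symm
  have hyx : y = x + 1 := gfroots_rel x y hx hy hxy
  have hvu : v = u + 1 := gfroots_rel u v hu hv huv
  have hxu : x ≠ u := by
    intro h
    have hyv : y = v := by rw [hyx, hvu, h]
    have := (div_eq_div_iff h014 h015).1 hyv
    exact h045 (by linear_combination this)
  have hux : u = x + 1 := gfroots_rel x u hx hu hxu
  have hsq : x ^ 2 = x + 1 := by linear_combination hx - gf2two * x - gf2two
  have e40 : p 4 0 = p 4 2 * x := by rw [hxdef]; field_simp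
  have e41 : p 4 1 = p 4 2 * (x + 1) := by rw [← hyx, hydef]; field_simp
  have e50 : p 5 0 = p 5 2 * x ^ 2 := by rw [hsq, ← hux, hudef]; field_simp
  have e51 : p 5 1 = p 5 2 * (x ^ 2 + 1) := by
    have hv' : v = x ^ 2 + 1 := by rw [hvu, hux, hsq]
    rw [← hv', hvdef]; field_simp
  refine ⟨x, hx, p 4 2, p 5 2, h014, h015, ?_, ?_⟩
  · have h4 : p 4 = ![p 4 0, p 4 1, p 4 2] := by
      funext i; fin_cases i <;> rfl
    rw [h4, e40, e41]
    simp [Matrix.smul_cons, smul_eq_mul, Matrix.smul_empty]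
  · have h5 : p 5 = ![p 5 0, p 5 1, p 5 2] := by
      funext i; fin_cases i <;> rfl
    rw [h5, e50, e51]
    simp [Matrix.smul_cons, smul_eq_mul, Matrix.smul_empty]
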